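/- For nonnegative integers n, r with r \ge n, \sum_{i=0}^{n} {n choose_2 i} e^{it}(e^t-1)^{r-i}/(r-i)! = \sum_{m\ge 0} {m+n choose_2 r} t^m/m!, where {· ·} denotes Stirling numbers of the second kind. -/

import Mathlib

open PowerSeries Finset

/-- Stirling numbers of the second kind. -/
def stirling2 : ℕ → ℕ → ℕ
  | 0, 0 => 1
  | 0, _ + 1 => 0
  | _ + 1, 0 => 0
  | n + 1, m + 1 => stirling2 n m + (m + 1) * stirling2 n (m + 1)

lemma d_exp : d⁄dX ℚ (PowerSeries.exp ℚ) = PowerSeries.exp ℚ := by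
  ext n
  rw [coeff_derivative, coeff_exp, coeff_exp]
  have h1 : ((n:ℚ)+1) ≠ 0 := by positivity
  have h2 : (n.factorial:ℚ) ≠ 0 := Nat.cast_ne_zero.mpr n.factorial_ne_zero
  simp only [Algebra.algebraMap_self, RingHom.id_apply, id_eq, Rat.cast_div, Nat.factorial_succ]
  push_cast
  field_simp
lemma d_mk (f : ℕ → ℚ) : d⁄dX ℚ (PowerSeries.mk f) = PowerSeries.mk fun m => f (m+1) * (m+1) := by
  ext n
  rw [coeff_derivative, coeff_mk, coeff_mk]
lemma eq_zero_of_D (a : ℚ) (u : ℚ⟦X⟧) (h1 : d⁄dX ℚ u = C a * u)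
    (h2 : constantCoeff u = 0) : u = 0 := by
  ext n
  induction n with
  | zero => simpa using h2
  | succ n ih =>
    have := congrArg (coeff n) h1
    rw [coeff_derivative, coeff_C_mul, ih] at this
    have h3 : ((n:ℚ)+1) ≠ 0 := by positivity
    simp only [map_zero, mul_zero] at this ⊢
    exact (mul_eq_zero.mp this).resolve_right h3
lemma d_exp_pow (i : ℕ) :
    d⁄dX ℚ ((PowerSeries.exp ℚ)^i) = (i:ℚ⟦X⟧) * (PowerSeries.exp ℚ)^i := by
  induction i with
  | zero => simp
  | succ i ih =>
    rw [pow_succ, Derivation.leibniz, ih, d_exp]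
    simp only [smul_eq_mul]
    push_cast
    ring
lemma d_em_pow (k : ℕ) :
    d⁄dX ℚ ((PowerSeries.exp ℚ - 1)^(k+1)) =
      ((k:ℚ⟦X⟧)+1) * ((PowerSeries.exp ℚ - 1)^k * PowerSeries.exp ℚ) := by
  induction k with
  | zero => simp [d_exp]
  | succ k ih =>
    rw [pow_succ, Derivation.leibniz, ih]
    have : d⁄dX ℚ (PowerSeries.exp ℚ - 1) = PowerSeries.exp ℚ := by
      simp [d_exp]
    rw [this]
    simp only [smul_eq_mul]
    push_cast
    ring
lemma stirling2_eq_zero : ∀ {n m : ℕ}, n < m → stirling2 n m = 0 := by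
  intro n
  induction n with
  | zero => intro m hm; match m, hm with | m+1, _ => rfl
  | succ n ih =>
    intro m hm
    match m, hm with
    | m+1, hm =>
      show stirling2 n m + (m + 1) * stirling2 n (m + 1) = 0
      rw [ih (by omega), ih (by omega)]
      ring
lemma term_deriv (a : ℚ) (i k : ℕ) :
    d⁄dX ℚ ((a/(((k+1).factorial:ℕ):ℚ)) • ((PowerSeries.exp ℚ)^i * (PowerSeries.exp ℚ - 1)^(k+1)))
    = (((i:ℚ)*a)/(((k+1).factorial:ℕ):ℚ)) • ((PowerSeries.exp ℚ)^i * (PowerSeries.exp ℚ - 1)^(k+1))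
      + (a/((k.factorial:ℕ):ℚ)) • ((PowerSeries.exp ℚ)^(i+1) * (PowerSeries.exp ℚ - 1)^k) := by
  set E := PowerSeries.exp ℚ with hE
  have c1 : C (a/(((k+1).factorial:ℕ):ℚ)) * C ((k:ℚ)+1) = C (a/((k.factorial:ℕ):ℚ)) := by
    rw [← map_mul]
    congr 1
    have h2 : (k.factorial:ℚ) ≠ 0 := Nat.cast_ne_zero.mpr k.factorial_ne_zero
    have h3 : ((k:ℚ)+1) ≠ 0 := by positivity
    rw [Nat.factorial_succ]
    push_cast
    field_simp
  have c2 : C (((i:ℚ)*a)/(((k+1).factorial:ℕ):ℚ)) = C (i:ℚ) * C (a/(((k+1).factorial:ℕ):ℚ)) := by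
    rw [← map_mul]
    congr 1
    ring
  rw [Derivation.map_smul, Derivation.leibniz, d_exp_pow, d_em_pow]
  simp only [smul_eq_mul, smul_eq_C_mul]
  have hcast1 : (i:ℚ⟦X⟧) = C (i:ℚ) := by simp
  have hcast2 : ((k:ℚ⟦X⟧)+1) = C ((k:ℚ)+1) := by simp
  rw [hcast1, hcast2, c2]
  linear_combination (E^(i+1)*(E-1)^k) * c1
lemma egf (r : ℕ) : (1/(r.factorial:ℚ)) • (PowerSeries.exp ℚ - 1)^r =
    PowerSeries.mk fun m => (stirling2 m r : ℚ)/m.factorial := by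
  induction r with
  | zero =>
    ext n
    cases n with
    | zero => simp [stirling2, coeff_mk]
    | succ n => simp [stirling2, coeff_mk]
  | succ r ih =>
    set E := PowerSeries.exp ℚ with hE
    set L := (1/((r+1).factorial:ℚ)) • (E - 1)^(r+1) with hL
    set R := PowerSeries.mk (fun m => (stirling2 m (r+1) : ℚ)/m.factorial) with hR
    have c1 : C (1/(((r+1).factorial:ℕ):ℚ)) * C ((r:ℚ)+1) = C (1/((r.factorial:ℕ):ℚ)) := by
      rw [← map_mul]
      congr 1
      have h2 : (r.factorial:ℚ) ≠ 0 := Nat.cast_ne_zero.mpr r.factorial_ne_zero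
      have h3 : ((r:ℚ)+1) ≠ 0 := by positivity
      rw [Nat.factorial_succ]
      push_cast
      field_simp
    have hDL : d⁄dX ℚ L = (1/(r.factorial:ℚ)) • (E - 1)^r + C ((r:ℚ)+1) * L := by
      rw [hL, Derivation.map_smul, d_em_pow, smul_eq_C_mul, smul_eq_C_mul, smul_eq_C_mul]
      have hcast : ((r:ℚ⟦X⟧)+1) = C ((r:ℚ)+1) := by
        simp [map_add, map_natCast]
      rw [hcast]
      linear_combination ((E-1)^r * E - (E-1)^(r+1)) * c1
    have hDR : d⁄dX ℚ R = PowerSeries.mk (fun m => (stirling2 m r : ℚ)/m.factorial)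
        + C ((r:ℚ)+1) * R := by
      rw [hR, d_mk]
      ext m
      rw [map_add, coeff_mk, coeff_mk, coeff_C_mul, coeff_mk]
      have h2 : (m.factorial:ℚ) ≠ 0 := Nat.cast_ne_zero.mpr m.factorial_ne_zero
      have h3 : ((m:ℚ)+1) ≠ 0 := by positivity
      show (stirling2 (m+1) (r+1) : ℚ) / (m+1).factorial * (m+1) = _
      rw [show stirling2 (m+1) (r+1) = stirling2 m r + (r+1) * stirling2 m (r+1) from rfl,
        Nat.factorial_succ]
      push_cast
      field_simp
    have hu : L - R = 0 := by
      apply eq_zero_of_D ((r:ℚ)+1)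
      · rw [map_sub, hDL, hDR, ih]
        ring
      · rw [map_sub, hL, hR]
        have : constantCoeff ((E-1)^(r+1)) = 0 := by
          rw [map_pow]
          simp [hE]
        rw [constantCoeff_smul, this, coeff_zero_eq_constantCoeff.symm, coeff_mk]
        simp [stirling2]
    exact sub_eq_zero.mp hu

/-- ∑_{i=0}^n {n,i} e^{it}(e^t-1)^{r-i}/(r-i)! = ∑_m {m+n,r} t^m/m!. -/
theorem takeda_second (n r : ℕ) (h : n ≤ r) :
    ∑ i ∈ range (n + 1),
        ((stirling2 n i : ℚ) / ((r - i).factorial : ℚ)) •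
          ((PowerSeries.exp ℚ) ^ i * (PowerSeries.exp ℚ - 1) ^ (r - i)) =
      PowerSeries.mk fun m => (stirling2 (m + n) r : ℚ) / m.factorial := by
  induction n with
  | zero =>
    rw [Finset.sum_range_one]
    simp only [Nat.sub_zero, pow_zero, one_mul, Nat.add_zero]
    rw [show ((stirling2 0 0 : ℚ)) = 1 from by norm_num [stirling2]]
    exact egf r
  | succ n IH =>
    have hn : n ≤ r := by omega
    -- RHS is the derivative of the previous RHS
    have key2 : (PowerSeries.mk fun m => (stirling2 (m + (n+1)) r : ℚ)/m.factorial)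
        = d⁄dX ℚ (PowerSeries.mk fun m => (stirling2 (m + n) r : ℚ)/m.factorial) := by
      rw [d_mk]
      ext m
      rw [coeff_mk, coeff_mk]
      have h2 : (m.factorial:ℚ) ≠ 0 := Nat.cast_ne_zero.mpr m.factorial_ne_zero
      have h3 : ((m:ℚ)+1) ≠ 0 := by positivity
      rw [show m + 1 + n = m + (n+1) from by omega, Nat.factorial_succ]
      push_cast
      field_simp
    rw [key2, ← IH hn, map_sum]
    -- per-term derivative
    have hterm : ∀ i ∈ range (n+1),
        d⁄dX ℚ (((stirling2 n i : ℚ) / ((r - i).factorial : ℚ)) •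
          ((PowerSeries.exp ℚ) ^ i * (PowerSeries.exp ℚ - 1) ^ (r - i)))
        = (((i:ℚ) * (stirling2 n i : ℚ)) / ((r - i).factorial : ℚ)) •
            ((PowerSeries.exp ℚ) ^ i * (PowerSeries.exp ℚ - 1) ^ (r - i))
          + ((stirling2 n i : ℚ) / ((r - (i+1)).factorial : ℚ)) •
            ((PowerSeries.exp ℚ) ^ (i+1) * (PowerSeries.exp ℚ - 1) ^ (r - (i+1))) := by
      intro i hi
      rw [Finset.mem_range] at hi
      have hk : r - i = r - (i+1) + 1 := by omega
      rw [hk]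
      exact term_deriv _ i (r - (i+1))
    rw [Finset.sum_congr rfl hterm, Finset.sum_add_distrib, Finset.sum_range_succ']
    -- G 0 = 0
    have hG0 : ((stirling2 (n+1) 0 : ℚ) / ((r - 0).factorial : ℚ)) •
        ((PowerSeries.exp ℚ) ^ 0 * (PowerSeries.exp ℚ - 1) ^ (r - 0)) = 0 := by
      rw [show stirling2 (n+1) 0 = 0 from rfl]
      simp
    rw [hG0, add_zero]
    -- G (i+1) = C i + B i
    have hGsucc : ∀ i ∈ range (n+1),
        ((stirling2 (n+1) (i+1) : ℚ) / ((r - (i+1)).factorial : ℚ)) •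
          ((PowerSeries.exp ℚ) ^ (i+1) * (PowerSeries.exp ℚ - 1) ^ (r - (i+1)))
        = (((stirling2 n i : ℚ)) / ((r - (i+1)).factorial : ℚ)) •
            ((PowerSeries.exp ℚ) ^ (i+1) * (PowerSeries.exp ℚ - 1) ^ (r - (i+1)))
          + ((((i:ℚ)+1) * (stirling2 n (i+1) : ℚ)) / ((r - (i+1)).factorial : ℚ)) •
            ((PowerSeries.exp ℚ) ^ (i+1) * (PowerSeries.exp ℚ - 1) ^ (r - (i+1))) := by
      intro i _
      rw [show stirling2 (n+1) (i+1) = stirling2 n i + (i+1) * stirling2 n (i+1) from rfl]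
      push_cast
      rw [add_div, add_smul]
    rw [Finset.sum_congr rfl hGsucc, Finset.sum_add_distrib]
    have hCA : (∑ i ∈ range (n+1), ((((i:ℚ)+1) * (stirling2 n (i+1) : ℚ)) / ((r - (i+1)).factorial : ℚ)) •
            ((PowerSeries.exp ℚ) ^ (i+1) * (PowerSeries.exp ℚ - 1) ^ (r - (i+1))))
        = ∑ i ∈ range (n+1), (((i:ℚ) * (stirling2 n i : ℚ)) / ((r - i).factorial : ℚ)) •
            ((PowerSeries.exp ℚ) ^ i * (PowerSeries.exp ℚ - 1) ^ (r - i)) := by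
      rw [Finset.sum_range_succ, Finset.sum_range_succ']
      have hCn : ((((n:ℚ)+1) * (stirling2 n (n+1) : ℚ)) / ((r - (n+1)).factorial : ℚ)) •
          ((PowerSeries.exp ℚ) ^ (n+1) * (PowerSeries.exp ℚ - 1) ^ (r - (n+1))) = 0 := by
        rw [stirling2_eq_zero (Nat.lt_succ_self n)]
        simp
      have hA0 : ((((0:ℕ):ℚ) * (stirling2 n 0 : ℚ)) / ((r - 0).factorial : ℚ)) •
          ((PowerSeries.exp ℚ) ^ 0 * (PowerSeries.exp ℚ - 1) ^ (r - 0)) = 0 := by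
        simp
      rw [hCn, hA0, add_zero, add_zero]
      apply Finset.sum_congr rfl
      intro i _
      push_cast
      ring_nf
    rw [hCA, add_comm]
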